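/- Let A be a finite-dimensional algebra over a field and f an idempotent such that the left A-module A/AfA has projective dimension at most 1. Then fA is projective as a left module over the algebra fAf. -/

import Mathlib

open CategoryTheory

noncomputable section

/-- Vanishing of the `n`-th Ext group of two `A`-modules. -/
def ExtVanish (A : Type) [Ring A] (n : ℕ) (X Y : ModuleCat.{0} A) : Prop :=
  Limits.IsZero (((Ext ℤ (ModuleCat.{0} A) n).obj (Opposite.op X)).obj Y)

/-- `M` belongs to `add X`: it is a direct summand of a finite direct sum of copies of `X`. -/
def InAdd (A : Type) [Ring A] (X M : ModuleCat.{0} A) : Prop :=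
  ∃ (n : ℕ) (i : M →ₗ[A] (Fin n → X)) (p : (Fin n → X) →ₗ[A] M),
    p.comp i = LinearMap.id

/-- `N` is a (first) syzygy of `M`: there is an exact sequence `0 → N → P → M → 0`
with `P` projective. -/
def IsSyzygyOf (A : Type) [Ring A] (N M : ModuleCat.{0} A) : Prop :=
  ∃ (P : ModuleCat.{0} A), Module.Projective A P ∧
    ∃ (ι : N →ₗ[A] P) (π : P →ₗ[A] M),
      Function.Injective ι ∧ Function.Surjective π ∧ Function.Exact ι π

/-- `N` is an `n`-th syzygy of `M`. -/
def IsNthSyzygyOf (A : Type) [Ring A] : ℕ → ModuleCat.{0} A → ModuleCat.{0} A → Prop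
  | 0, N, M => Nonempty (N ≅ M)
  | n + 1, N, M => ∃ K : ModuleCat.{0} A, IsSyzygyOf A K M ∧ IsNthSyzygyOf A n N K

/-- `N` is a (first) cosyzygy of `M`: there is an exact sequence `0 → M → I → N → 0`
with `I` injective. -/
def IsCosyzygyOf (A : Type) [Ring A] (N M : ModuleCat.{0} A) : Prop :=
  ∃ (I : ModuleCat.{0} A), Module.Injective A I ∧
    ∃ (ι : M →ₗ[A] I) (π : I →ₗ[A] N),
      Function.Injective ι ∧ Function.Surjective π ∧ Function.Exact ι π

/-- `N` is an `n`-th cosyzygy of `M`. -/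
def IsNthCosyzygyOf (A : Type) [Ring A] : ℕ → ModuleCat.{0} A → ModuleCat.{0} A → Prop
  | 0, N, M => Nonempty (N ≅ M)
  | n + 1, N, M => ∃ K : ModuleCat.{0} A, IsCosyzygyOf A K M ∧ IsNthCosyzygyOf A n N K

/-- The projective dimension of `M` is at most `n`. -/
def ProjDimLE (A : Type) [Ring A] (n : ℕ) (M : ModuleCat.{0} A) : Prop :=
  ∃ K : ModuleCat.{0} A, IsNthSyzygyOf A n K M ∧ Module.Projective A K

/-- The injective dimension of `M` is at most `n`. -/
def InjDimLE (A : Type) [Ring A] (n : ℕ) (M : ModuleCat.{0} A) : Prop :=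
  ∃ K : ModuleCat.{0} A, IsNthCosyzygyOf A n K M ∧ Module.Injective A K

/-- The underlying type of `D(A) = Hom_k(A, k)`. -/
def DualMod (k A : Type) [Field k] [Ring A] [Algebra k A] : Type := A →ₗ[k] k

instance (k A : Type) [Field k] [Ring A] [Algebra k A] : AddCommGroup (DualMod k A) :=
  inferInstanceAs (AddCommGroup (A →ₗ[k] k))

/-- Auxiliary scalar action for `DualMod`. -/
def dualSMul (k A : Type) [Field k] [Ring A] [Algebra k A] (a : A) (φ : A →ₗ[k] k) :
    A →ₗ[k] k := φ.comp (LinearMap.mulRight k a)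

/-- The left `A`-module structure on `D(A)`: `(a • φ) x = φ (x * a)`. -/
instance (k A : Type) [Field k] [Ring A] [Algebra k A] : Module A (DualMod k A) where
  smul a φ := dualSMul k A a φ
  one_smul φ := by
    show dualSMul k A 1 φ = φ
    unfold dualSMul; ext x; show DFunLike.coe (F := A →ₗ[k] k) φ (x * 1) = DFunLike.coe (F := A →ₗ[k] k) φ x; rw [mul_one]
  mul_smul a b φ := by
    show dualSMul k A (a * b) φ = dualSMul k A a (dualSMul k A b φ)
    unfold dualSMul; ext x; show DFunLike.coe (F := A →ₗ[k] k) φ (x * (a * b)) = DFunLike.coe (F := A →ₗ[k] k) φ (x * a * b); rw [mul_assoc]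
  smul_zero a := by
    show dualSMul k A a 0 = 0
    unfold dualSMul; ext x; simp
  smul_add a φ ψ := by
    show dualSMul k A a (φ + ψ) = dualSMul k A a φ + dualSMul k A a ψ
    unfold dualSMul; ext x; rfl
  add_smul a b φ := by
    show dualSMul k A (a + b) φ = dualSMul k A a φ + dualSMul k A b φ
    unfold dualSMul; ext x; show DFunLike.coe (F := A →ₗ[k] k) φ (x * (a + b)) = DFunLike.coe (F := A →ₗ[k] k) φ (x * a) + DFunLike.coe (F := A →ₗ[k] k) φ (x * b); rw [mul_add]; exact map_add (F := A →ₗ[k] k) φ (x * a) (x * b)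
  zero_smul φ := by
    show dualSMul k A 0 φ = 0
    unfold dualSMul; ext x; show DFunLike.coe (F := A →ₗ[k] k) φ (x * 0) = 0; rw [mul_zero]; exact map_zero (F := A →ₗ[k] k) φ

/-- `D(A)`, the dual of the right regular module, as an object of `ModuleCat A`. -/
def DualA (k A : Type) [Field k] [Ring A] [Algebra k A] : ModuleCat.{0} A :=
  ModuleCat.of A (DualMod k A)

/-- The idempotent ideal `⟨e⟩ = AeA`, as a left submodule of `A`. -/
def idemIdeal (A : Type) [Ring A] (e : A) : Submodule A A :=
  Submodule.span A (Set.range fun b : A => e * b)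

/-- The quotient `A/⟨e⟩` as a left `A`-module. -/
def quotMod (A : Type) [Ring A] (e : A) : ModuleCat.{0} A :=
  ModuleCat.of A (A ⧸ idemIdeal A e)

/-- The left ideal `Ae = {x | x * e = x}` (for `e` idempotent), as a submodule of `A`. -/
def leftPart (A : Type) [Ring A] (e : A) : Submodule A A where
  carrier := {x | x * e = x}
  add_mem' := by intro a b ha hb; simp only [Set.mem_setOf_eq] at *; rw [add_mul, ha, hb]
  zero_mem' := by simp
  smul_mem' := by intro c x hx; simp only [Set.mem_setOf_eq, smul_eq_mul] at *;
                  rw [mul_assoc, hx]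

/-- `Ae` as an object of `ModuleCat A`. -/
def AeMod (A : Type) [Ring A] (e : A) : ModuleCat.{0} A :=
  ModuleCat.of A (leftPart A e)

/-- `M` is Gorenstein projective: `Ext^i_A(M, A) = 0` for all `i > 0`. -/
def IsGorensteinProjective (A : Type) [Ring A] (M : ModuleCat.{0} A) : Prop :=
  ∀ i : ℕ, 0 < i → ExtVanish A i M (ModuleCat.of A A)

/-- `M` is Gorenstein injective: `Ext^i_A(D(A), M) = 0` for all `i > 0`. -/
def IsGorensteinInjective (k A : Type) [Field k] [Ring A] [Algebra k A]
    (M : ModuleCat.{0} A) : Prop :=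
  ∀ i : ℕ, 0 < i → ExtVanish A i (DualA k A) M

/-- `M ∈ gen_l(Ae)`: `M` has a projective resolution whose terms in degrees `≤ l`
lie in `add (Ae)`. -/
def GenLE (A : Type) [Ring A] (e : A) (l : ℕ) (M : ModuleCat.{0} A) : Prop :=
  ∃ (P : ℕ → ModuleCat.{0} A) (d : ∀ n : ℕ, (P (n + 1) →ₗ[A] P n)) (π : P 0 →ₗ[A] M),
    (∀ n, Module.Projective A (P n)) ∧
    Function.Surjective π ∧
    Function.Exact (d 0) π ∧
    (∀ n, Function.Exact (d (n + 1)) (d n)) ∧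
    (∀ n ≤ l, InAdd A (AeMod A e) (P n))


section Corner
variable (A : Type) [Ring A] (f : A)

/-- The additive subgroup `fAf = {x | f * x * f = x}` of `A`. -/
def cornerAddSubgroup : AddSubgroup A where
  carrier := {x | f * x * f = x}
  add_mem' := by
    intro a b ha hb
    simp only [Set.mem_setOf_eq] at *
    rw [mul_add, add_mul, ha, hb]
  zero_mem' := by simp
  neg_mem' := by
    intro a ha
    simp only [Set.mem_setOf_eq] at *
    rw [mul_neg, neg_mul, ha]

/-- The corner algebra `fAf`, as a type. -/
def Corner : Type := ↥(cornerAddSubgroup A f)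

instance : AddCommGroup (Corner A f) :=
  inferInstanceAs (AddCommGroup (cornerAddSubgroup A f))

variable {A f}

theorem Corner.mem_eq (x : Corner A f) : f * x.1 * f = x.1 := x.2

theorem Corner.left_absorb (hf : IsIdempotentElem f) (x : Corner A f) :
    f * x.1 = x.1 := by
  conv_lhs => rw [← x.2]
  rw [← mul_assoc, ← mul_assoc, hf]
  exact x.2

theorem Corner.right_absorb (hf : IsIdempotentElem f) (x : Corner A f) :
    x.1 * f = x.1 := by
  conv_lhs => rw [← x.2]
  rw [mul_assoc, hf]
  exact x.2

variable (A f)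

/-- The ring structure (with unit `f`) on the corner `fAf` of an idempotent `f`. -/
def cornerRing (hf : IsIdempotentElem f) : Ring (Corner A f) :=
  { (inferInstance : AddCommGroup (Corner A f)) with
    mul := fun x y => ⟨x.1 * y.1, by
      show f * (x.1 * y.1) * f = x.1 * y.1
      rw [← mul_assoc f x.1 y.1, Corner.left_absorb hf x,
        mul_assoc x.1 y.1 f, Corner.right_absorb hf y]⟩
    one := ⟨f, by show f * f * f = f; rw [hf, hf]⟩
    mul_assoc := fun x y z => Subtype.ext (mul_assoc x.1 y.1 z.1)
    one_mul := fun x => Subtype.ext (Corner.left_absorb hf x)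
    mul_one := fun x => Subtype.ext (Corner.right_absorb hf x)
    left_distrib := fun x y z => Subtype.ext (mul_add x.1 y.1 z.1)
    right_distrib := fun x y z => Subtype.ext (add_mul x.1 y.1 z.1)
    zero_mul := fun x => Subtype.ext (zero_mul x.1)
    mul_zero := fun x => Subtype.ext (mul_zero x.1) }

/-- The additive subgroup `fA = {x | f * x = x}` of `A`. -/
def faAddSubgroup : AddSubgroup A where
  carrier := {x | f * x = x}
  add_mem' := by
    intro a b ha hb
    simp only [Set.mem_setOf_eq] at *
    rw [mul_add, ha, hb]
  zero_mem' := by simp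
  neg_mem' := by
    intro a ha
    simp only [Set.mem_setOf_eq] at *
    rw [mul_neg, ha]

/-- `fA`, as a type. -/
def FA : Type := ↥(faAddSubgroup A f)

instance : AddCommGroup (FA A f) := inferInstanceAs (AddCommGroup (faAddSubgroup A f))

/-- The left `fAf`-module structure on `fA`, by multiplication. -/
def faModule (hf : IsIdempotentElem f) :
    letI : Ring (Corner A f) := cornerRing A f hf
    Module (Corner A f) (FA A f) :=
  letI : Ring (Corner A f) := cornerRing A f hf
  { smul := fun c x => ⟨c.1 * x.1, by
      show f * (c.1 * x.1) = c.1 * x.1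
      rw [← mul_assoc, Corner.left_absorb hf c]⟩
    one_smul := fun x => Subtype.ext (x.2 : f * x.1 = x.1)
    mul_smul := fun c d x => Subtype.ext (mul_assoc c.1 d.1 x.1)
    smul_zero := fun c => Subtype.ext (mul_zero c.1)
    smul_add := fun c x y => Subtype.ext (mul_add c.1 x.1 y.1)
    add_smul := fun c d x => Subtype.ext (add_mul c.1 d.1 x.1)
    zero_smul := fun x => Subtype.ext (zero_mul x.1) }

end Corner


section Schanuel
variable {R : Type} [Ring R] {P A' M : Type} [AddCommGroup P] [AddCommGroup A'] [AddCommGroup M]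
  [Module R P] [Module R A'] [Module R M]

theorem ker_projective_of_ker_projective [Module.Projective R P] [Module.Projective R A']
    (π : P →ₗ[R] M) (q : A' →ₗ[R] M) (hπ : Function.Surjective π) (hq : Function.Surjective q)
    (hker : Module.Projective R (LinearMap.ker π)) :
    Module.Projective R (LinearMap.ker q) := by
  -- the pullback
  set X : Submodule R (P × A') :=
    { carrier := {x | π x.1 = q x.2}
      add_mem' := by
        intro a b ha hb
        simp only [Set.mem_setOf_eq, Prod.fst_add, Prod.snd_add, map_add] at *
        rw [ha, hb]
      zero_mem' := by simp
      smul_mem' := by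
        intro c x hx
        simp only [Set.mem_setOf_eq, Prod.smul_fst, Prod.smul_snd, map_smul] at *
        rw [hx] } with hXdef
  have memX : ∀ x : X, π x.1.1 = q x.1.2 := fun x => x.2
  set sndX : X →ₗ[R] A' := (LinearMap.snd R P A').comp X.subtype with hsnd
  set fstX : X →ₗ[R] P := (LinearMap.fst R P A').comp X.subtype with hfst
  have hsndsurj : Function.Surjective sndX := by
    intro a
    obtain ⟨p, hp⟩ := hπ (q a)
    exact ⟨⟨(p, a), hp⟩, rfl⟩
  have hfstsurj : Function.Surjective fstX := by
    intro p
    obtain ⟨a, ha⟩ := hq (π p)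
    exact ⟨⟨(p, a), ha.symm⟩, rfl⟩
  obtain ⟨s, hs⟩ := Module.projective_lifting_property sndX LinearMap.id hsndsurj
  obtain ⟨t, ht⟩ := Module.projective_lifting_property fstX LinearMap.id hfstsurj
  have hs' : ∀ a, sndX (s a) = a := fun a => LinearMap.congr_fun hs a
  have ht' : ∀ p, fstX (t p) = p := fun p => LinearMap.congr_fun ht p
  -- ker sndX is projective (isomorphic to ker π)
  let i2 : LinearMap.ker sndX →ₗ[R] LinearMap.ker π :=
    LinearMap.codRestrict (LinearMap.ker π) (fstX.comp (LinearMap.ker sndX).subtype)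
      (by
        rintro ⟨x, hx⟩
        have h0 : x.1.2 = 0 := hx
        have := memX x
        simp only [LinearMap.mem_ker]
        show π x.1.1 = 0
        rw [this, h0, map_zero])
  let s2 : LinearMap.ker π →ₗ[R] LinearMap.ker sndX :=
    { toFun := fun p => ⟨⟨(p.1, 0), show π p.1 = q 0 by rw [map_zero]; exact p.2⟩, rfl⟩
      map_add' := fun a b => by
        apply Subtype.ext; apply Subtype.ext
        show ((a.1 + b.1 : P), (0 : A')) = (a.1 + b.1, 0 + 0)
        rw [add_zero]
      map_smul' := fun c a => by
        apply Subtype.ext; apply Subtype.ext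
        show ((c • a.1 : P), (0 : A')) = (c • a.1, c • (0 : A'))
        rw [smul_zero] }
  have H2 : s2.comp i2 = LinearMap.id := by
    apply LinearMap.ext
    rintro ⟨⟨⟨p, a⟩, hpa⟩, hy⟩
    have h0 : a = 0 := hy
    apply Subtype.ext; apply Subtype.ext
    show ((p, (0:A')) : P × A') = (p, a)
    rw [h0]
  haveI hkersnd : Module.Projective R (LinearMap.ker sndX) :=
    Module.Projective.of_split i2 s2 H2
  -- X is projective
  have j1mem : ∀ x : X, ((LinearMap.id : X →ₗ[R] X) - s.comp sndX) x ∈ LinearMap.ker sndX := by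
    intro x
    have : sndX (x - s (sndX x)) = 0 := by
      rw [map_sub, hs' (sndX x), sub_self]
    exact this
  let iX : X →ₗ[R] (LinearMap.ker sndX × A') :=
    (LinearMap.codRestrict (LinearMap.ker sndX) ((LinearMap.id : X →ₗ[R] X) - s.comp sndX) j1mem).prod sndX
  let sX : (LinearMap.ker sndX × A') →ₗ[R] X :=
    (LinearMap.ker sndX).subtype.comp (LinearMap.fst R _ _) + s.comp (LinearMap.snd R _ _)
  have HX : sX.comp iX = LinearMap.id := by
    apply LinearMap.ext
    intro x
    show (x - s (sndX x)) + s (sndX x) = x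
    rw [sub_add_cancel]
  haveI hXproj : Module.Projective R X := Module.Projective.of_split iX sX HX
  -- ker q is a direct summand of X
  let i3 : LinearMap.ker q →ₗ[R] X :=
    LinearMap.codRestrict X ((LinearMap.inr R P A').comp (LinearMap.ker q).subtype)
      (by
        rintro ⟨a, ha⟩
        show π 0 = q a
        rw [map_zero]
        exact (LinearMap.mem_ker.mp ha).symm)
  let r3 : X →ₗ[R] LinearMap.ker q :=
    LinearMap.codRestrict (LinearMap.ker q) (sndX - sndX.comp (t.comp fstX))
      (by
        intro x
        have hx : q (sndX x) = π (fstX x) := (memX x).symm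
        have hy : q (sndX (t (fstX x))) = π (fstX (t (fstX x))) := (memX (t (fstX x))).symm
        show q (sndX x - sndX (t (fstX x))) = 0
        rw [map_sub, hx, hy, ht' (fstX x), sub_self])
  have H3 : r3.comp i3 = LinearMap.id := by
    apply LinearMap.ext
    intro a
    apply Subtype.ext
    show sndX (i3 a) - sndX (t (fstX (i3 a))) = a.1
    have h1 : fstX (i3 a) = 0 := rfl
    rw [h1, map_zero, map_zero, sub_zero]
    rfl
  exact Module.Projective.of_split i3 r3 H3

end Schanuel

/-- If `A/AfA` has projective dimension at most one as a left `A`-module,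
then `fA` is projective as a left `fAf`-module. -/
theorem stmt_4 (k A : Type) [Field k] [Ring A] [Algebra k A] [FiniteDimensional k A]
    (f : A) (hf : IsIdempotentElem f)
    (hpd : ProjDimLE A 1 (quotMod A f)) :
    letI : Ring (Corner A f) := cornerRing A f hf
    letI : Module (Corner A f) (FA A f) := faModule A f hf
    Module.Projective (Corner A f) (FA A f) := by
  letI : Ring (Corner A f) := cornerRing A f hf
  letI : Module (Corner A f) (FA A f) := faModule A f hf
  set I : Submodule A A := idemIdeal A f with hIdef
  -- Step 1: `I = AfA` is projective as a left `A`-module.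
  obtain ⟨K, hK1, hKproj⟩ := hpd
  obtain ⟨K', hSyz, hK0⟩ := hK1
  obtain ⟨e⟩ := hK0
  haveI : Module.Projective A K := hKproj
  haveI hK'proj : Module.Projective A K' := Module.Projective.of_equiv e.toLinearEquiv
  obtain ⟨P, hPproj, ι, π, hinj, hsurj, hexact⟩ := hSyz
  haveI : Module.Projective A P := hPproj
  have hrange : LinearMap.range ι = LinearMap.ker π := (LinearMap.exact_iff.mp hexact).symm
  haveI hkerπ : Module.Projective A (LinearMap.ker π) :=
    Module.Projective.of_equiv
      ((LinearEquiv.ofInjective ι hinj).trans (LinearEquiv.ofEq _ _ hrange))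
  have hqsurj : Function.Surjective I.mkQ := Submodule.mkQ_surjective I
  haveI hkerq : Module.Projective A (LinearMap.ker I.mkQ) :=
    ker_projective_of_ker_projective (M := (quotMod A f : Type)) π I.mkQ hsurj hqsurj hkerπ
  haveI hIproj : Module.Projective A I :=
    Module.Projective.of_equiv (LinearEquiv.ofEq _ _ (Submodule.ker_mkQ I))
  -- Step 2: a finite generating family of `I` consisting of elements of `fA`.
  obtain ⟨n, sb, hsb⟩ := Module.Finite.exists_fin (R := k) (M := A)
  set t : Fin n → A := fun i => f * sb i with htdef
  have hft : ∀ i, f * t i = t i := by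
    intro i
    show f * (f * sb i) = f * sb i
    rw [← mul_assoc, hf]
  have htI : ∀ i, t i ∈ I := fun i => Submodule.subset_span ⟨sb i, rfl⟩
  have hfmem : ∀ b : A, f * b ∈ Submodule.span A (Set.range t) := by
    intro b
    have hW : (⊤ : Submodule k A) ≤ Submodule.comap (LinearMap.mulLeft k f)
        ((Submodule.span A (Set.range t)).restrictScalars k) := by
      rw [← hsb]
      apply Submodule.span_le.mpr
      rintro _ ⟨i, rfl⟩
      show f * sb i ∈ Submodule.span A (Set.range t)
      exact Submodule.subset_span ⟨i, rfl⟩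
    exact hW Submodule.mem_top
  have hspan : Submodule.span A (Set.range t) = I := by
    apply le_antisymm
    · apply Submodule.span_le.mpr
      rintro _ ⟨i, rfl⟩
      exact htI i
    · apply Submodule.span_le.mpr
      rintro _ ⟨b, rfl⟩
      exact hfmem b
  have hmemI : ∀ x : FA A f, (x.1 : A) ∈ I := by
    intro x
    have hx : f * x.1 = x.1 := x.2
    rw [← hx, ← hspan]
    exact hfmem x.1
  -- Step 3: a split surjection `A^n → I` over `A`.
  let φ : (Fin n → A) →ₗ[A] A :=
    { toFun := fun a => ∑ i, a i * t i
      map_add' := by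
        intro a b
        simp [add_mul, Finset.sum_add_distrib]
      map_smul' := by
        intro c a
        simp [Finset.mul_sum, mul_assoc] }
  have hφapp : ∀ a, φ a = ∑ i, a i * t i := fun a => rfl
  have hφrange : LinearMap.range φ = I := by
    rw [← hspan]
    apply le_antisymm
    · rintro _ ⟨a, rfl⟩
      rw [hφapp]
      exact Submodule.sum_mem _ fun i _ =>
        Submodule.smul_mem _ (a i) (Submodule.subset_span ⟨i, rfl⟩)
    · apply Submodule.span_le.mpr
      rintro _ ⟨i, rfl⟩
      refine ⟨Pi.single i 1, ?_⟩
      rw [hφapp]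
      simp [Pi.single_apply, ite_mul]
  let φ' : (Fin n → A) →ₗ[A] I :=
    φ.codRestrict I (fun a => hφrange ▸ LinearMap.mem_range_self φ a)
  have hφ'surj : Function.Surjective φ' := by
    rintro ⟨x, hx⟩
    rw [← hφrange] at hx
    obtain ⟨a, ha⟩ := hx
    exact ⟨a, Subtype.ext ha⟩
  obtain ⟨σ, hσ⟩ := Module.projective_lifting_property φ' LinearMap.id hφ'surj
  have hσ' : ∀ x : I, ∑ i, σ x i * t i = x.1 := by
    intro x
    have h1 : φ' (σ x) = x := LinearMap.congr_fun hσ x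
    have h2 := congrArg Subtype.val h1
    exact h2
  -- Step 4: transport the splitting to `fAf`-modules.
  let χ : FA A f → I := fun x => ⟨x.1, hmemI x⟩
  have hχadd : ∀ x y, χ (x + y) = χ x + χ y := fun x y => Subtype.ext rfl
  have hχsmul : ∀ (c : Corner A f) (x : FA A f), χ (c • x) = c.1 • χ x :=
    fun c x => Subtype.ext rfl
  have hmemC : ∀ y : A, f * (f * y * f) * f = f * y * f := by
    intro y
    simp only [← mul_assoc]
    rw [hf, mul_assoc, hf]
  let g : FA A f →ₗ[Corner A f] (Fin n → Corner A f) :=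
    { toFun := fun x => fun i => ⟨f * σ (χ x) i * f, hmemC _⟩
      map_add' := by
        intro x y
        funext i
        apply Subtype.ext
        show f * σ (χ (x + y)) i * f = f * σ (χ x) i * f + f * σ (χ y) i * f
        rw [hχadd, map_add]
        show f * (σ (χ x) i + σ (χ y) i) * f = _
        rw [mul_add, add_mul]
      map_smul' := by
        intro c x
        funext i
        apply Subtype.ext
        show f * σ (χ (c • x)) i * f = c.1 * (f * σ (χ x) i * f)
        rw [hχsmul, map_smul]
        show f * (c.1 * σ (χ x) i) * f = c.1 * (f * σ (χ x) i * f)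
        simp only [← mul_assoc]
        rw [Corner.left_absorb hf c, Corner.right_absorb hf c] }
  let hmap : (Fin n → Corner A f) →ₗ[Corner A f] FA A f :=
    { toFun := fun c => ⟨∑ i, (c i).1 * t i, by
        show f * (∑ i, (c i).1 * t i) = ∑ i, (c i).1 * t i
        rw [Finset.mul_sum]
        refine Finset.sum_congr rfl fun i _ => ?_
        rw [← mul_assoc, Corner.left_absorb hf (c i)]⟩
      map_add' := by
        intro a b
        apply Subtype.ext
        show ∑ i, ((a i).1 + (b i).1) * t i = (∑ i, (a i).1 * t i) + ∑ i, (b i).1 * t i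
        rw [← Finset.sum_add_distrib]
        exact Finset.sum_congr rfl fun i _ => add_mul _ _ _
      map_smul' := by
        intro c a
        apply Subtype.ext
        show ∑ i, (c.1 * (a i).1) * t i = c.1 * ∑ i, (a i).1 * t i
        rw [Finset.mul_sum]
        exact Finset.sum_congr rfl fun i _ => mul_assoc _ _ _ }
  have Hsplit : hmap.comp g = LinearMap.id := by
    apply LinearMap.ext
    intro x
    apply Subtype.ext
    show ∑ i, (f * σ (χ x) i * f) * t i = x.1
    have step : ∀ i ∈ Finset.univ, (f * σ (χ x) i * f) * t i = f * (σ (χ x) i * t i) := by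
      intro i _
      rw [mul_assoc (f * σ (χ x) i) f (t i), hft i, mul_assoc]
    rw [Finset.sum_congr rfl step, ← Finset.mul_sum, hσ' (χ x)]
    exact x.2
  exact Module.Projective.of_split g hmap Hsplit


end
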